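/- Let M_b ∈ {0,1}^{m×n} with no zero row or column, M_d = (1+d)M_b - d·J for d > max(m,n) - 1. Then a pair (v, w) with v ∈ ℝᵐ₊ \ {0}, w ∈ ℝⁿ₊ \ {0}, vwᵀ binary and vwᵀ ≤ M_b (i.e., a feasible biclique solution), is a nontrivial stationary point of min_{v,w ≥ 0} ||M_d - vwᵀ||_F² (i.e., satisfies v = max(0, M_d wᵀ / ||w||₂²) and wᵀ = max(0, vᵀ M_d / ||v||₂²)) if and only if the biclique is maximal, i.e., there is no index i with v_i = 0 and M_b(i,j) = 1 for all j with w_j ≠ 0, and no index j with w_j = 0 and M_b(i,j) = 1 for all i with v_i ≠ 0. -/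

import Mathlib

open Finset in
theorem side_lemma {m n : ℕ} (Mb : Fin m → Fin n → ℝ)
    (hbin : ∀ i j, Mb i j = 0 ∨ Mb i j = 1)
    (d : ℝ) (hd : (n : ℝ) - 1 < d)
    (v : Fin m → ℝ) (w : Fin n → ℝ)
    (a b : ℝ) (ha : 0 < a) (hb : 0 < b) (hab : a * b = 1)
    (hva : ∀ i, v i ≠ 0 → v i = a)
    (hwb : ∀ j, w j ≠ 0 → w j = b)
    (hM : ∀ i j, v i ≠ 0 → w j ≠ 0 → Mb i j = 1)
    (hw0 : w ≠ 0) :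
    (∀ i, v i = max 0 ((∑ j, ((1 + d) * Mb i j - d) * w j) / (∑ j, (w j) ^ 2)))
    ↔ ¬ ∃ i, v i = 0 ∧ ∀ j, w j ≠ 0 → Mb i j = 1 := by
  classical
  set T : Finset (Fin n) := univ.filter (fun j => w j ≠ 0) with hTdef
  have hTmem : ∀ j, j ∈ T ↔ w j ≠ 0 := fun j => by simp [hTdef]
  have hTne : T.Nonempty := by
    obtain ⟨j, hj⟩ := Function.ne_iff.mp hw0
    exact ⟨j, (hTmem j).mpr hj⟩
  have htpos : (0:ℝ) < (T.card : ℝ) := by exact_mod_cast card_pos.mpr hTne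
  have htn : (T.card : ℝ) ≤ (n : ℝ) := by
    have := T.card_le_univ
    simp only [card_univ, Fintype.card_fin] at this
    exact_mod_cast this
  have hd0 : 0 < 1 + d := by linarith
  have hsumT : ∀ (f : Fin n → ℝ), (∀ j, w j = 0 → f j = 0) →
      ∑ j, f j = ∑ j ∈ T, f j := by
    intro f hf
    refine (Finset.sum_subset (subset_univ T) ?_).symm
    intro j _ hj
    refine hf j ?_
    by_contra h
    exact hj ((hTmem j).mpr h)
  have hS2 : ∑ j, (w j) ^ 2 = (T.card : ℝ) * b ^ 2 := by
    rw [hsumT _ (fun j hj => by rw [hj]; ring)]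
    rw [Finset.sum_congr rfl (fun j hj => by rw [hwb j ((hTmem j).mp hj)])]
    rw [Finset.sum_const, nsmul_eq_mul]
  have hS2pos : 0 < ∑ j, (w j) ^ 2 := by
    rw [hS2]; exact mul_pos htpos (pow_pos hb 2)
  have hN : ∀ i, ∑ j, ((1 + d) * Mb i j - d) * w j
      = b * ((1 + d) * (∑ j ∈ T, Mb i j) - d * (T.card : ℝ)) := by
    intro i
    rw [hsumT _ (fun j hj => by rw [hj]; ring)]
    rw [Finset.sum_congr rfl (fun j hj => by rw [hwb j ((hTmem j).mp hj)])]
    rw [← Finset.sum_mul, Finset.sum_sub_distrib, ← Finset.mul_sum, Finset.sum_const,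
      nsmul_eq_mul]
    ring
  have hKfull : ∀ i, (∀ j, w j ≠ 0 → Mb i j = 1) → ∑ j ∈ T, Mb i j = (T.card : ℝ) := by
    intro i h
    rw [Finset.sum_congr rfl (fun j hj => h j ((hTmem j).mp hj))]
    simp
  have hpos_case : ∀ i, v i ≠ 0 →
      v i = max 0 ((∑ j, ((1 + d) * Mb i j - d) * w j) / (∑ j, (w j) ^ 2)) := by
    intro i hvi
    have hK := hKfull i (fun j hj => hM i j hvi hj)
    rw [hN i, hK, hS2, hva i hvi]
    have hkey : b * ((1 + d) * (T.card : ℝ) - d * (T.card : ℝ)) / ((T.card : ℝ) * b ^ 2) = a := by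
      rw [div_eq_iff (by positivity)]
      linear_combination (-(T.card : ℝ) * b) * hab
    rw [hkey, max_eq_right ha.le]
  have hzero_case : ∀ i, v i = 0 →
      ((v i = max 0 ((∑ j, ((1 + d) * Mb i j - d) * w j) / (∑ j, (w j) ^ 2)))
        ↔ ¬ (∀ j, w j ≠ 0 → Mb i j = 1)) := by
    intro i hvi
    rw [hvi, hN i, hS2]
    constructor
    · intro h hall
      rw [hKfull i hall] at h
      have hpos : (0:ℝ) < b * ((1 + d) * (T.card : ℝ) - d * (T.card : ℝ)) / ((T.card : ℝ) * b ^ 2) := by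
        have heq : b * ((1 + d) * (T.card : ℝ) - d * (T.card : ℝ)) = (T.card : ℝ) * b := by ring
        rw [heq]
        exact div_pos (mul_pos htpos hb) (mul_pos htpos (pow_pos hb 2))
      rw [max_eq_right hpos.le] at h
      linarith
    · intro hnot
      push_neg at hnot
      obtain ⟨j1, hj1w, hj1⟩ := hnot
      have hj1T : j1 ∈ T := (hTmem j1).mpr hj1w
      have hMb0 : Mb i j1 = 0 := (hbin i j1).resolve_right hj1
      have hKle : ∑ j ∈ T, Mb i j ≤ (T.card : ℝ) - 1 := by
        have h1 : ∑ j ∈ T, Mb i j = ∑ j ∈ T.erase j1, Mb i j := by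
          rw [← Finset.sum_erase_add T _ hj1T, hMb0, add_zero]
        have h2 : ∑ j ∈ T.erase j1, Mb i j ≤ ((T.erase j1).card : ℝ) * 1 := by
          have := Finset.sum_le_card_nsmul (T.erase j1) (fun j => Mb i j) 1
            (fun j _ => by rcases hbin i j with h | h <;> simp [h])
          simpa [nsmul_eq_mul] using this
        have h3 : ((T.erase j1).card : ℝ) = (T.card : ℝ) - 1 := by
          rw [Finset.card_erase_of_mem hj1T]
          have h4 : 1 ≤ T.card := card_pos.mpr hTne
          push_cast [Nat.cast_sub h4]
          ring
        rw [h1]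
        calc ∑ j ∈ T.erase j1, Mb i j ≤ ((T.erase j1).card : ℝ) * 1 := h2
          _ = (T.card : ℝ) - 1 := by rw [h3]; ring
      have hdt : (T.card : ℝ) - 1 ≤ d := by linarith
      have hnum : b * ((1 + d) * (∑ j ∈ T, Mb i j) - d * (T.card : ℝ)) ≤ 0 := by
        have hmul : (1 + d) * (∑ j ∈ T, Mb i j) ≤ (1 + d) * ((T.card : ℝ) - 1) :=
          mul_le_mul_of_nonneg_left hKle hd0.le
        have : (1 + d) * (∑ j ∈ T, Mb i j) - d * (T.card : ℝ) ≤ 0 := by nlinarith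
        exact mul_nonpos_of_nonneg_of_nonpos hb.le this
      symm
      rw [max_eq_left]
      exact div_nonpos_of_nonpos_of_nonneg hnum (by positivity)
  constructor
  · rintro hstat ⟨i, hvi, hall⟩
    exact ((hzero_case i hvi).mp (hstat i)) hall
  · intro hmax i
    by_cases hvi : v i = 0
    · exact (hzero_case i hvi).mpr (fun hall => hmax ⟨i, hvi, hall⟩)
    · exact hpos_case i hvi

/-- For d > max(m,n) - 1, a feasible biclique solution (v,w) (vwᵀ binary,
vwᵀ ≤ M_b) is a nontrivial stationary point of the rank-one NF problem for
M_d = (1+d)M_b - d·J if and only if the corresponding biclique is maximal. -/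
theorem stmt_3 (m n : ℕ) (Mb : Fin m → Fin n → ℝ)
    (hbin : ∀ i j, Mb i j = 0 ∨ Mb i j = 1)
    (hrow : ∀ i, ∃ j, Mb i j = 1) (hcol : ∀ j, ∃ i, Mb i j = 1)
    (d : ℝ) (hd : (max m n : ℝ) - 1 < d)
    (Md : Fin m → Fin n → ℝ) (hMd : ∀ i j, Md i j = (1 + d) * Mb i j - d)
    (v : Fin m → ℝ) (w : Fin n → ℝ)
    (hv : ∀ i, 0 ≤ v i) (hw : ∀ j, 0 ≤ w j) (hv0 : v ≠ 0) (hw0 : w ≠ 0)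
    (hfeas : ∀ i j, (v i * w j = 0 ∨ v i * w j = 1) ∧ v i * w j ≤ Mb i j) :
    ((∀ i, v i = max 0 ((∑ j, Md i j * w j) / (∑ j, (w j) ^ 2))) ∧
     (∀ j, w j = max 0 ((∑ i, v i * Md i j) / (∑ i, (v i) ^ 2))))
    ↔
    ((¬ ∃ i, v i = 0 ∧ ∀ j, w j ≠ 0 → Mb i j = 1) ∧
     (¬ ∃ j, w j = 0 ∧ ∀ i, v i ≠ 0 → Mb i j = 1)) := by
  classical
  obtain ⟨i0, hi0⟩ := Function.ne_iff.mp hv0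
  obtain ⟨j0, hj0⟩ := Function.ne_iff.mp hw0
  have hvi0 : 0 < v i0 := (hv i0).lt_of_ne (Ne.symm hi0)
  have hwj0 : 0 < w j0 := (hw j0).lt_of_ne (Ne.symm hj0)
  have hprod1 : ∀ i j, v i ≠ 0 → w j ≠ 0 → v i * w j = 1 := by
    intro i j hi hj
    rcases (hfeas i j).1 with h | h
    · exact absurd h (mul_ne_zero hi hj)
    · exact h
  have hab : v i0 * w j0 = 1 := hprod1 i0 j0 hi0 hj0
  have hva : ∀ i, v i ≠ 0 → v i = v i0 :=
    fun i hi => mul_right_cancel₀ hj0 ((hprod1 i j0 hi hj0).trans hab.symm)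
  have hwb : ∀ j, w j ≠ 0 → w j = w j0 :=
    fun j hj => mul_left_cancel₀ hi0 ((hprod1 i0 j hi0 hj).trans hab.symm)
  have hM1 : ∀ i j, v i ≠ 0 → w j ≠ 0 → Mb i j = 1 := by
    intro i j hi hj
    rcases hbin i j with h | h
    · exfalso
      have h2 := (hfeas i j).2
      rw [hprod1 i j hi hj, h] at h2
      linarith
    · exact h
  have hdn : (n : ℝ) - 1 < d := by
    have h1 : (n : ℝ) ≤ max (m : ℝ) (n : ℝ) := le_max_right _ _
    linarith
  have hdm : (m : ℝ) - 1 < d := by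
    have h1 : (m : ℝ) ≤ max (m : ℝ) (n : ℝ) := le_max_left _ _
    linarith
  have h1 := side_lemma Mb hbin d hdn v w (v i0) (w j0) hvi0 hwj0 hab hva hwb hM1 hw0
  have h2 := side_lemma (fun j i => Mb i j) (fun j i => hbin i j) d hdm w v (w j0) (v i0)
    hwj0 hvi0 (by rw [mul_comm]; exact hab) hwb hva (fun j i hj hi => hM1 i j hi hj) hv0
  have hcomm : ∀ j, ∑ i, v i * Md i j = ∑ i, ((1 + d) * Mb i j - d) * v i := by
    intro j
    exact Finset.sum_congr rfl (fun i _ => by rw [hMd, mul_comm])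
  simp only [hMd]
  rw [show (∀ j, w j = max 0 ((∑ i, v i * ((1 + d) * Mb i j - d)) / ∑ i, (v i) ^ 2)) =
      (∀ j, w j = max 0 ((∑ i, ((1 + d) * Mb i j - d) * v i) / ∑ i, (v i) ^ 2)) from by
    simp only [mul_comm]]
  exact and_congr h1 h2
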